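/- Let A, B be von Neumann subalgebras of a tracial von Neumann algebra (M, τ). Define d(A,B) = max{‖(I−E_B)E_A‖_{∞,2}, ‖(I−E_A)E_B‖_{∞,2}} and d₂(A,B) = ‖E_A − E_B‖_{∞,2}, where ‖φ‖_{∞,2} = sup{‖φ(x)‖₂ : x in the operator-norm unit ball of M}. Then d(A,B) ≤ d₂(A,B) ≤ √(2·d(A,B)). -/

import Mathlib

variable {H : Type*} [NormedAddCommGroup H] [InnerProductSpace ℂ H] [CompleteSpace H]

/-- The tracial 2-norm `‖x‖₂ = τ(x* x)^{1/2}` associated to a trace `τ`. -/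
noncomputable def norm2 (τ : (H →L[ℂ] H) →ₗ[ℂ] ℂ) (x : H →L[ℂ] H) : ℝ :=
  Real.sqrt (τ (star x * x)).re

/-- `‖φ‖_{∞,2}`: the supremum of `‖φ x‖₂` over the operator-norm unit ball of `M`. -/
noncomputable def normInfTwo (M : Set (H →L[ℂ] H)) (τ : (H →L[ℂ] H) →ₗ[ℂ] ℂ)
    (φ : (H →L[ℂ] H) → (H →L[ℂ] H)) : ℝ :=
  sSup {r : ℝ | ∃ x : H →L[ℂ] H, x ∈ M ∧ ‖x‖ ≤ 1 ∧ r = norm2 τ (φ x)}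

/-!
STATEMENT 9. Let `A, B` be von Neumann subalgebras of a tracial von Neumann algebra `(M, τ)`,
with trace-preserving conditional expectations `E_A, E_B`.  Define
`d(A,B) = max{‖(I−E_B)E_A‖_{∞,2}, ‖(I−E_A)E_B‖_{∞,2}}` and `d₂(A,B) = ‖E_A − E_B‖_{∞,2}`.
Then `d(A,B) ≤ d₂(A,B) ≤ √(2 d(A,B))`. -/

lemma isClosed_centralizer' (S : Set (H →L[ℂ] H)) : IsClosed (Set.centralizer S) := by
  have h : Set.centralizer S = ⋂ m ∈ S, {g : H →L[ℂ] H | m * g = g * m} := by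
    ext g; simp [Set.mem_centralizer_iff]
  rw [h]
  exact isClosed_biInter fun m _ =>
    isClosed_eq (continuous_const.mul continuous_id) (continuous_id.mul continuous_const)

lemma vna_isClosed (M : VonNeumannAlgebra H) : IsClosed (M : Set (H →L[ℂ] H)) := by
  rw [← M.centralizer_centralizer]
  exact isClosed_centralizer' _

lemma key_bound (M : VonNeumannAlgebra H) (τ : (H →L[ℂ] H) →ₗ[ℂ] ℂ)
    (hτ1 : τ 1 = 1)
    (hτpos : ∀ x ∈ M, 0 ≤ (τ (star x * x)).re ∧ (τ (star x * x)).im = 0)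
    {x : H →L[ℂ] H} (hx : x ∈ M) : (τ (star x * x)).re ≤ ‖x‖ ^ 2 := by
  set b : (H →L[ℂ] H) := algebraMap ℝ (H →L[ℂ] H) (‖x‖ ^ 2) - star x * x with hb
  have hb0 : (0 : H →L[ℂ] H) ≤ b := sub_nonneg.mpr CStarAlgebra.star_mul_le_algebraMap_norm_sq
  have hbsa : IsSelfAdjoint b := .of_nonneg hb0
  have hbM : b ∈ M := by
    refine sub_mem ?_ (mul_mem (star_mem hx) hx)
    rw [IsScalarTower.algebraMap_apply ℝ ℂ (H →L[ℂ] H)]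
    exact M.toStarSubalgebra.algebraMap_mem _
  set f : ℂ → ℂ := fun z => (Real.sqrt z.re : ℂ) with hf
  have hfc : Continuous f :=
    Complex.continuous_ofReal.comp (Real.continuous_sqrt.comp Complex.continuous_re)
  set y : (H →L[ℂ] H) := cfc f b with hy
  have hsq : ∀ z ∈ spectrum ℂ b, f z * f z = z := by
    intro z hz
    have hzre : z = (z.re : ℂ) := hbsa.mem_spectrum_eq_re hz
    have hre : (0 : ℝ) ≤ z.re := by
      refine spectrum_nonneg_of_nonneg hb0 ?_
      rw [← spectrum.algebraMap_mem_iff ℂ]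
      show (z.re : ℂ) ∈ spectrum ℂ b
      rwa [← hzre]
    show ((Real.sqrt z.re : ℂ)) * (Real.sqrt z.re : ℂ) = z
    rw [← Complex.ofReal_mul, Real.mul_self_sqrt hre]
    exact hzre.symm
  have hyy : y * y = b := by
    rw [hy, ← cfc_mul f f b hfc.continuousOn hfc.continuousOn, cfc_congr hsq, cfc_id' ℂ b]
  have hystar : star y = y := by
    rw [hy, ← cfc_star]
    refine cfc_congr fun z hz => ?_
    simp [hf]
  have hyM : y ∈ M := by
    have hbn : IsStarNormal b := hbsa.isStarNormal
    have h1 : y ∈ StarAlgebra.elemental ℂ b := by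
      rw [hy, cfc_apply f b, cfcHom_eq_of_isStarNormal]
      exact Subtype.coe_prop _
    exact StarAlgebra.elemental.le_of_mem (vna_isClosed M) hbM h1
  have h0 : 0 ≤ (τ (star y * y)).re := (hτpos y hyM).1
  rw [hystar, hyy] at h0
  have hτb : τ b = (‖x‖ ^ 2 : ℝ) - τ (star x * x) := by
    rw [hb, map_sub]
    congr 1
    rw [IsScalarTower.algebraMap_apply ℝ ℂ (H →L[ℂ] H), Algebra.algebraMap_eq_smul_one,
      map_smul, hτ1]
    simp
  rw [hτb] at h0
  have := Complex.sub_re ((‖x‖ ^ 2 : ℝ) : ℂ) (τ (star x * x))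
  simp only [Complex.ofReal_re] at this
  rw [this] at h0
  linarith

lemma herm' (M : VonNeumannAlgebra H) (τ : (H →L[ℂ] H) →ₗ[ℂ] ℂ)
    (hτpos : ∀ x ∈ M, 0 ≤ (τ (star x * x)).re ∧ (τ (star x * x)).im = 0)
    {a b : H →L[ℂ] H} (ha : a ∈ M) (hb : b ∈ M) :
    τ (star b * a) = starRingEnd ℂ (τ (star a * b)) := by
  have hIb : Complex.I • b ∈ M := M.toStarSubalgebra.smul_mem hb Complex.I
  have h1 : (τ (star (a + b) * (a + b))).im = 0 := (hτpos _ (add_mem ha hb)).2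
  have h2 : (τ (star (a + Complex.I • b) * (a + Complex.I • b))).im = 0 :=
    (hτpos _ (add_mem ha hIb)).2
  have e1 : star (a + b) * (a + b) = star a * a + (star a * b + (star b * a + star b * b)) := by
    rw [star_add, add_mul, mul_add, mul_add]; abel
  have e2 : star (a + Complex.I • b) * (a + Complex.I • b)
      = star a * a + (Complex.I • (star a * b) + (star b * b + (-Complex.I) • (star b * a))) := by
    rw [star_add, star_smul]
    simp only [RCLike.star_def, Complex.conj_I, add_mul, mul_add, smul_mul_assoc,
      mul_smul_comm, smul_add, smul_smul, neg_mul, Complex.I_mul_I, neg_neg, one_smul]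
    match_scalars <;> simp [Complex.I_sq]
  rw [e1] at h1
  rw [e2] at h2
  have ia : (τ (star a * a)).im = 0 := (hτpos a ha).2
  have ib : (τ (star b * b)).im = 0 := (hτpos b hb).2
  simp only [map_add, map_smul, smul_eq_mul, Complex.add_im, Complex.mul_im, Complex.neg_re,
    Complex.neg_im, Complex.I_re, Complex.I_im, ia, ib] at h1 h2
  apply Complex.ext
  · simp only [Complex.conj_re]; linarith
  · simp only [Complex.conj_im]; linarith

lemma cs (M : VonNeumannAlgebra H) (τ : (H →L[ℂ] H) →ₗ[ℂ] ℂ)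
    (hτpos : ∀ x ∈ M, 0 ≤ (τ (star x * x)).re ∧ (τ (star x * x)).im = 0)
    (hτfaith : ∀ x ∈ M, τ (star x * x) = 0 → x = 0)
    {a b : H →L[ℂ] H} (ha : a ∈ M) (hb : b ∈ M) :
    ‖τ (star a * b)‖ ≤
      Real.sqrt (τ (star a * a)).re * Real.sqrt (τ (star b * b)).re := by
  by_cases hb0 : τ (star b * b) = 0
  · have hbz : b = 0 := hτfaith b hb hb0
    subst hbz
    simp only [mul_zero, map_zero, map_zero, norm_zero]
    positivity
  · have hQa0 : (0:ℝ) ≤ (τ (star a * a)).re := (hτpos a ha).1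
    have hQb : 0 < (τ (star b * b)).re := by
      rcases lt_or_eq_of_le (hτpos b hb).1 with h | h
      · exact h
      · exact absurd (Complex.ext h.symm (hτpos b hb).2) hb0
    set Qb : ℝ := (τ (star b * b)).re with hQbdef
    have hQbC : τ (star b * b) = (Qb : ℂ) := by
      apply Complex.ext
      · simp [hQbdef]
      · simp [(hτpos b hb).2]
    set α : ℂ := τ (star a * b) with hα
    set t : ℂ := starRingEnd ℂ α / (Qb : ℂ) with ht
    set c := a - t • b with hc
    have hcM : c ∈ M := sub_mem ha (M.toStarSubalgebra.smul_mem hb t)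
    have hexp : star c * c = star a * a - t • (star a * b) - (starRingEnd ℂ t) • (star b * a)
        + ((starRingEnd ℂ t) * t) • (star b * b) := by
      rw [hc, star_sub, star_smul]
      simp only [RCLike.star_def, sub_mul, mul_sub, smul_mul_assoc, mul_smul_comm, smul_smul,
        smul_sub, sub_smul]
      match_scalars <;> ring
    have h0 : 0 ≤ (τ (star c * c)).re := (hτpos c hcM).1
    rw [hexp] at h0
    simp only [map_add, map_sub, map_smul, smul_eq_mul] at h0
    rw [herm' M τ hτpos ha hb, hQbC, ← hα] at h0
    have hQbne : ((Qb : ℂ)) ≠ 0 := by exact_mod_cast ne_of_gt hQb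
    have hid : τ (star a * a) - t * α - starRingEnd ℂ t * starRingEnd ℂ α
        + starRingEnd ℂ t * t * (Qb : ℂ)
        = τ (star a * a) - ((Complex.normSq α / Qb : ℝ) : ℂ) := by
      rw [ht]
      field_simp
      rw [← Complex.normSq_eq_conj_mul_self]
      push_cast
      field_simp
      ring
    rw [hid] at h0
    have h1 : Complex.normSq α / Qb ≤ (τ (star a * a)).re := by
      have := Complex.sub_re (τ (star a * a)) ((Complex.normSq α / Qb : ℝ) : ℂ)
      simp only [Complex.ofReal_re] at this
      rw [this] at h0
      linarith
    have h2 : Complex.normSq α ≤ (τ (star a * a)).re * Qb := by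
      rw [div_le_iff₀ hQb] at h1
      linarith [h1]
    calc ‖α‖ = Real.sqrt (Complex.normSq α) := Complex.norm_def α
      _ ≤ Real.sqrt ((τ (star a * a)).re * Qb) := Real.sqrt_le_sqrt h2
      _ = Real.sqrt (τ (star a * a)).re * Real.sqrt Qb := Real.sqrt_mul hQa0 _

theorem stmt9 (M A B : VonNeumannAlgebra H)
    (hAM : (A : Set (H →L[ℂ] H)) ⊆ M) (hBM : (B : Set (H →L[ℂ] H)) ⊆ M)
    (τ : (H →L[ℂ] H) →ₗ[ℂ] ℂ)
    -- `τ` is a faithful tracial state on `M`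
    (hτ1 : τ 1 = 1)
    (hτtr : ∀ x ∈ M, ∀ y ∈ M, τ (x * y) = τ (y * x))
    (hτpos : ∀ x ∈ M, 0 ≤ (τ (star x * x)).re ∧ (τ (star x * x)).im = 0)
    (hτfaith : ∀ x ∈ M, τ (star x * x) = 0 → x = 0)
    (EA EB : (H →L[ℂ] H) →ₗ[ℂ] (H →L[ℂ] H))
    -- `E_A` is the trace-preserving conditional expectation of `M` onto `A`
    (hEAran : ∀ x ∈ M, EA x ∈ A) (hEAfix : ∀ a ∈ A, EA a = a)
    (hEAbimod : ∀ a ∈ A, ∀ x ∈ M, ∀ a' ∈ A, EA (a * x * a') = a * EA x * a')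
    (hEAtr : ∀ x ∈ M, τ (EA x) = τ x)
    (hEAadj : ∀ x ∈ M, ∀ y ∈ M, τ (star (EA x) * y) = τ (star x * EA y))
    (hEAcontr : ∀ x ∈ M, ‖EA x‖ ≤ ‖x‖)
    -- `E_B` is the trace-preserving conditional expectation of `M` onto `B`
    (hEBran : ∀ x ∈ M, EB x ∈ B) (hEBfix : ∀ b ∈ B, EB b = b)
    (hEBbimod : ∀ b ∈ B, ∀ x ∈ M, ∀ b' ∈ B, EB (b * x * b') = b * EB x * b')
    (hEBtr : ∀ x ∈ M, τ (EB x) = τ x)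
    (hEBadj : ∀ x ∈ M, ∀ y ∈ M, τ (star (EB x) * y) = τ (star x * EB y))
    (hEBcontr : ∀ x ∈ M, ‖EB x‖ ≤ ‖x‖) :
    max (normInfTwo (M : Set (H →L[ℂ] H)) τ (fun x => EA x - EB (EA x)))
        (normInfTwo (M : Set (H →L[ℂ] H)) τ (fun x => EB x - EA (EB x))) ≤
      normInfTwo (M : Set (H →L[ℂ] H)) τ (fun x => EA x - EB x) ∧
    normInfTwo (M : Set (H →L[ℂ] H)) τ (fun x => EA x - EB x) ≤
      Real.sqrt (2 * max (normInfTwo (M : Set (H →L[ℂ] H)) τ (fun x => EA x - EB (EA x)))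
        (normInfTwo (M : Set (H →L[ℂ] H)) τ (fun x => EB x - EA (EB x)))) := by
  classical
  -- membership helpers
  have hEAm : ∀ x ∈ M, EA x ∈ M := fun x hx => hAM (hEAran x hx)
  have hEBm : ∀ x ∈ M, EB x ∈ M := fun x hx => hBM (hEBran x hx)
  -- norm2 of elements of M is bounded by the operator norm
  have hn2 : ∀ z ∈ M, norm2 τ z ≤ ‖z‖ := by
    intro z hz
    rw [norm2]
    calc Real.sqrt (τ (star z * z)).re ≤ Real.sqrt (‖z‖ ^ 2) :=
          Real.sqrt_le_sqrt (key_bound M τ hτ1 hτpos hz)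
      _ = ‖z‖ := Real.sqrt_sq (norm_nonneg z)
  have hn2neg : ∀ z : H →L[ℂ] H, norm2 τ (-z) = norm2 τ z := by
    intro z; rw [norm2, norm2, star_neg, neg_mul_neg]
  -- the three sets
  set SA : Set ℝ := {r : ℝ | ∃ x : H →L[ℂ] H, x ∈ (M : Set (H →L[ℂ] H)) ∧ ‖x‖ ≤ 1 ∧
    r = norm2 τ (EA x - EB (EA x))} with hSA
  set SB : Set ℝ := {r : ℝ | ∃ x : H →L[ℂ] H, x ∈ (M : Set (H →L[ℂ] H)) ∧ ‖x‖ ≤ 1 ∧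
    r = norm2 τ (EB x - EA (EB x))} with hSB
  set SD : Set ℝ := {r : ℝ | ∃ x : H →L[ℂ] H, x ∈ (M : Set (H →L[ℂ] H)) ∧ ‖x‖ ≤ 1 ∧
    r = norm2 τ (EA x - EB x)} with hSD
  have eSA : normInfTwo (M : Set (H →L[ℂ] H)) τ (fun x => EA x - EB (EA x)) = sSup SA := rfl
  have eSB : normInfTwo (M : Set (H →L[ℂ] H)) τ (fun x => EB x - EA (EB x)) = sSup SB := rfl
  have eSD : normInfTwo (M : Set (H →L[ℂ] H)) τ (fun x => EA x - EB x) = sSup SD := rfl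
  -- boundedness
  have bddA : ∀ r ∈ SA, r ≤ 2 := by
    rintro r ⟨x, hx, hx1, rfl⟩
    have hz : EA x - EB (EA x) ∈ M := sub_mem (hEAm x hx) (hEBm _ (hEAm x hx))
    refine le_trans (hn2 _ hz) ?_
    calc ‖EA x - EB (EA x)‖ ≤ ‖EA x‖ + ‖EB (EA x)‖ := norm_sub_le _ _
      _ ≤ ‖x‖ + ‖x‖ := add_le_add (hEAcontr x hx)
          (le_trans (hEBcontr _ (hEAm x hx)) (hEAcontr x hx))
      _ ≤ 2 := by linarith
  have bddB : ∀ r ∈ SB, r ≤ 2 := by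
    rintro r ⟨x, hx, hx1, rfl⟩
    have hz : EB x - EA (EB x) ∈ M := sub_mem (hEBm x hx) (hEAm _ (hEBm x hx))
    refine le_trans (hn2 _ hz) ?_
    calc ‖EB x - EA (EB x)‖ ≤ ‖EB x‖ + ‖EA (EB x)‖ := norm_sub_le _ _
      _ ≤ ‖x‖ + ‖x‖ := add_le_add (hEBcontr x hx)
          (le_trans (hEAcontr _ (hEBm x hx)) (hEBcontr x hx))
      _ ≤ 2 := by linarith
  have bddD : ∀ r ∈ SD, r ≤ 2 := by
    rintro r ⟨x, hx, hx1, rfl⟩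
    have hz : EA x - EB x ∈ M := sub_mem (hEAm x hx) (hEBm x hx)
    refine le_trans (hn2 _ hz) ?_
    calc ‖EA x - EB x‖ ≤ ‖EA x‖ + ‖EB x‖ := norm_sub_le _ _
      _ ≤ ‖x‖ + ‖x‖ := add_le_add (hEAcontr x hx) (hEBcontr x hx)
      _ ≤ 2 := by linarith
  have hM0 : (0 : H →L[ℂ] H) ∈ M := zero_mem M.toStarSubalgebra
  have h00 : ∀ w : H →L[ℂ] H, w = 0 → norm2 τ w = 0 := by
    intro w hw; rw [hw, norm2]; simp
  have neA : SA.Nonempty := ⟨_, 0, hM0, by simp, rfl⟩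
  have neB : SB.Nonempty := ⟨_, 0, hM0, by simp, rfl⟩
  have neD : SD.Nonempty := ⟨_, 0, hM0, by simp, rfl⟩
  have zeroA : (0:ℝ) ∈ SA := ⟨0, hM0, by simp, by rw [h00]; simp⟩
  have zeroB : (0:ℝ) ∈ SB := ⟨0, hM0, by simp, by rw [h00]; simp⟩
  constructor
  · -- first inequality
    rw [eSA, eSB, eSD]
    have hsubA : SA ⊆ SD := by
      rintro r ⟨x, hx, hx1, rfl⟩
      refine ⟨EA x, hEAm x hx, le_trans (hEAcontr x hx) hx1, ?_⟩
      rw [hEAfix (EA x) (hEAran x hx)]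
    have hsubB : SB ⊆ SD := by
      rintro r ⟨x, hx, hx1, rfl⟩
      refine ⟨EB x, hEBm x hx, le_trans (hEBcontr x hx) hx1, ?_⟩
      rw [hEBfix (EB x) (hEBran x hx), ← hn2neg, neg_sub]
    exact max_le (csSup_le_csSup ⟨2, fun r hr => bddD r hr⟩ neA hsubA)
      (csSup_le_csSup ⟨2, fun r hr => bddD r hr⟩ neB hsubB)
  · -- second inequality
    rw [eSA, eSB, eSD]
    set D : ℝ := max (sSup SA) (sSup SB) with hD
    have hDA : sSup SA ≤ D := le_max_left _ _
    have hDB : sSup SB ≤ D := le_max_right _ _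
    refine csSup_le neD ?_
    rintro r ⟨x, hx, hx1, rfl⟩
    set p := EA x - EB (EA x) with hp
    set q := EB x - EA (EB x) with hq
    set u := EA x - EB x with hu
    have hpM : p ∈ M := sub_mem (hEAm x hx) (hEBm _ (hEAm x hx))
    have hqM : q ∈ M := sub_mem (hEBm x hx) (hEAm _ (hEBm x hx))
    have huM : u ∈ M := sub_mem (hEAm x hx) (hEBm x hx)
    -- key identity
    have adj1 : τ (star (EA x) * EA x) = τ (star x * EA x) := by
      rw [hEAadj x hx (EA x) (hEAm x hx), hEAfix (EA x) (hEAran x hx)]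
    have adj2 : τ (star (EA x) * EB x) = τ (star x * EA (EB x)) :=
      hEAadj x hx (EB x) (hEBm x hx)
    have adj3 : τ (star (EB x) * EA x) = τ (star x * EB (EA x)) :=
      hEBadj x hx (EA x) (hEAm x hx)
    have adj4 : τ (star (EB x) * EB x) = τ (star x * EB x) := by
      rw [hEBadj x hx (EB x) (hEBm x hx), hEBfix (EB x) (hEBran x hx)]
    have e : star u * u = star (EA x) * EA x - star (EA x) * EB x - star (EB x) * EA x
        + star (EB x) * EB x := by
      rw [hu, star_sub, sub_mul, mul_sub, mul_sub]; abel
    have key : τ (star u * u) = τ (star x * p) + τ (star x * q) := by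
      rw [e, map_add, map_sub, map_sub, adj1, adj2, adj3, adj4, hp, hq,
        mul_sub, mul_sub, map_sub, map_sub]
      ring
    -- bound
    have hx2 : Real.sqrt (τ (star x * x)).re ≤ 1 := by
      rw [show (1:ℝ) = Real.sqrt 1 by simp]
      refine Real.sqrt_le_sqrt ?_
      refine le_trans (key_bound M τ hτ1 hτpos hx) ?_
      nlinarith [norm_nonneg x]
    have hpD : norm2 τ p ≤ D := by
      refine le_trans (le_csSup ⟨2, fun r hr => bddA r hr⟩ ?_) hDA
      exact ⟨x, hx, hx1, rfl⟩
    have hqD : norm2 τ q ≤ D := by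
      refine le_trans (le_csSup ⟨2, fun r hr => bddB r hr⟩ ?_) hDB
      exact ⟨x, hx, hx1, rfl⟩
    have hD0 : 0 ≤ D := le_trans (le_csSup ⟨2, fun r hr => bddA r hr⟩ zeroA) hDA
    have hp0 : 0 ≤ norm2 τ p := Real.sqrt_nonneg _
    have hq0 : 0 ≤ norm2 τ q := Real.sqrt_nonneg _
    have hbound : (τ (star u * u)).re ≤ 2 * D := by
      have h1 : (τ (star u * u)).re = (τ (star x * p)).re + (τ (star x * q)).re := by
        rw [key, Complex.add_re]
      have h2 : (τ (star x * p)).re ≤ norm2 τ p := by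
        refine le_trans (Complex.re_le_norm _) ?_
        refine le_trans (cs M τ hτpos hτfaith hx hpM) ?_
        rw [norm2]
        nlinarith [Real.sqrt_nonneg (τ (star p * p)).re, hx2,
          Real.sqrt_nonneg (τ (star x * x)).re]
      have h3 : (τ (star x * q)).re ≤ norm2 τ q := by
        refine le_trans (Complex.re_le_norm _) ?_
        refine le_trans (cs M τ hτpos hτfaith hx hqM) ?_
        rw [norm2]
        nlinarith [Real.sqrt_nonneg (τ (star q * q)).re, hx2,
          Real.sqrt_nonneg (τ (star x * x)).re]
      linarith
    calc norm2 τ u = Real.sqrt (τ (star u * u)).re := rfl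
      _ ≤ Real.sqrt (2 * D) := Real.sqrt_le_sqrt hbound
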